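/- For every integer n ≥ 1, every subset T ⊆ {2,…,n}, and any two subsets A, B ⊆ T with |A| = |B|, the number of permutations π of {1,…,n} whose set of positions of proper lower records equals A and whose set of positions of proper upper records equals T∖A is equal to the number of permutations π of {1,…,n} whose set of positions of proper lower records equals B and whose set of positions of proper upper records equals T∖B. (Equivalently: under the uniform distribution on S_n, conditionally on the record counts and on the set of positions occupied by the ℓ+u proper records, all C(ℓ+u, ℓ) allocations of the ℓ lower records among these positions are equally likely.) -/

import Mathlib

open Finset

/-- `π j` is a lower record: it is the minimum among the first `j+1` entries. -/
def isLowerRecord {n : ℕ} (π : Equiv.Perm (Fin n)) (j : Fin n) : Prop :=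
  ∀ k, k ≤ j → π j ≤ π k

/-- `π j` is an upper record: it is the maximum among the first `j+1` entries. -/
def isUpperRecord {n : ℕ} (π : Equiv.Perm (Fin n)) (j : Fin n) : Prop :=
  ∀ k, k ≤ j → π k ≤ π j

instance {n : ℕ} (π : Equiv.Perm (Fin n)) (j : Fin n) : Decidable (isLowerRecord π j) :=
  inferInstanceAs (Decidable (∀ k, k ≤ j → π j ≤ π k))

instance {n : ℕ} (π : Equiv.Perm (Fin n)) (j : Fin n) : Decidable (isUpperRecord π j) :=
  inferInstanceAs (Decidable (∀ k, k ≤ j → π k ≤ π j))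

/-- number of proper (position ≥ 2, i.e. index ≥ 1) lower records -/
def properLowerCount {n : ℕ} (π : Equiv.Perm (Fin n)) : ℕ :=
  (univ.filter fun j : Fin n => 0 < j.val ∧ isLowerRecord π j).card

/-- number of proper (position ≥ 2, i.e. index ≥ 1) upper records -/
def properUpperCount {n : ℕ} (π : Equiv.Perm (Fin n)) : ℕ :=
  (univ.filter fun j : Fin n => 0 < j.val ∧ isUpperRecord π j).card

/-- `A n ℓ u` = number of permutations of `{1,…,n}` with exactly `ℓ` proper lower
records and exactly `u` proper upper records. -/
def A (n ℓ u : ℕ) : ℕ :=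
  (univ.filter fun π : Equiv.Perm (Fin n) =>
    properLowerCount π = ℓ ∧ properUpperCount π = u).card

/-- the set of positions (indices `≥ 1`, i.e. positions `≥ 2`) of proper lower records -/
def properLowerRecSet {n : ℕ} (π : Equiv.Perm (Fin n)) : Finset (Fin n) :=
  univ.filter fun j : Fin n => 0 < j.val ∧ isLowerRecord π j

/-- the set of positions (indices `≥ 1`, i.e. positions `≥ 2`) of proper upper records -/
def properUpperRecSet {n : ℕ} (π : Equiv.Perm (Fin n)) : Finset (Fin n) :=
  univ.filter fun j : Fin n => 0 < j.val ∧ isUpperRecord π j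

namespace RecordsAux

open Finset

variable {n : ℕ}

/-- the Lehmer-type code entry: number of positions `k ≤ j` with `π k < π j`. -/
def codeVal (π : Equiv.Perm (Fin n)) (j : Fin n) : ℕ :=
  (univ.filter fun k => k ≤ j ∧ π k < π j).card

lemma codeVal_filter (π : Equiv.Perm (Fin n)) (j : Fin n) :
    (univ.filter fun k => k ≤ j ∧ π k < π j) = (Iic j).filter (fun k => π k < π j) := by
  ext k; simp [Finset.mem_filter, Finset.mem_Iic]

lemma filter_subset_Iio (π : Equiv.Perm (Fin n)) (j : Fin n) :
    (univ.filter fun k => k ≤ j ∧ π k < π j) ⊆ Iio j := by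
  intro k hk
  rcases Finset.mem_filter.mp hk with ⟨-, hle, hlt⟩
  rcases lt_or_eq_of_le hle with h | rfl
  · simpa [Finset.mem_Iio] using h
  · exact absurd hlt (lt_irrefl _)

lemma codeVal_le (π : Equiv.Perm (Fin n)) (j : Fin n) : codeVal π j ≤ j.val := by
  have := Finset.card_le_card (filter_subset_Iio π j)
  simpa [codeVal, Fin.card_Iio] using this

lemma isLowerRecord_iff (π : Equiv.Perm (Fin n)) (j : Fin n) :
    isLowerRecord π j ↔ codeVal π j = 0 := by
  unfold isLowerRecord codeVal
  rw [Finset.card_eq_zero, Finset.filter_eq_empty_iff]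
  constructor
  · intro h k _
    rintro ⟨hk, hlt⟩
    exact absurd (h k hk) (not_le.mpr hlt)
  · intro h k hk
    by_contra hc
    exact h (Finset.mem_univ k) ⟨hk, not_le.mp hc⟩

lemma isUpperRecord_iff (π : Equiv.Perm (Fin n)) (j : Fin n) :
    isUpperRecord π j ↔ codeVal π j = j.val := by
  constructor
  · intro h
    unfold codeVal
    have : (univ.filter fun k => k ≤ j ∧ π k < π j) = Iio j := by
      apply Finset.Subset.antisymm (filter_subset_Iio π j)
      intro k hk
      have hk' : k < j := Finset.mem_Iio.mp hk
      refine Finset.mem_filter.mpr ⟨Finset.mem_univ k, le_of_lt hk', ?_⟩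
      exact lt_of_le_of_ne (h k (le_of_lt hk')) (fun he => absurd (π.injective he) (ne_of_lt hk'))
    rw [this, Fin.card_Iio]
  · intro h k hk
    have heq : (univ.filter fun k => k ≤ j ∧ π k < π j) = Iio j := by
      apply Finset.eq_of_subset_of_card_le (filter_subset_Iio π j)
      rw [Fin.card_Iio]; exact le_of_eq h.symm
    rcases lt_or_eq_of_le hk with hlt | rfl
    · have : k ∈ (univ.filter fun k => k ≤ j ∧ π k < π j) := by
        rw [heq]; exact Finset.mem_Iio.mpr hlt
      exact le_of_lt (Finset.mem_filter.mp this).2.2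
    · exact le_refl _

lemma mem_properLower (π : Equiv.Perm (Fin n)) (j : Fin n) :
    j ∈ properLowerRecSet π ↔ 0 < j.val ∧ codeVal π j = 0 := by
  simp [properLowerRecSet, isLowerRecord_iff]

lemma mem_properUpper (π : Equiv.Perm (Fin n)) (j : Fin n) :
    j ∈ properUpperRecSet π ↔ 0 < j.val ∧ codeVal π j = j.val := by
  simp [properUpperRecSet, isUpperRecord_iff]

/-- the code as a dependent function -/
def code (π : Equiv.Perm (Fin n)) : ∀ j : Fin n, Fin (j.val + 1) :=
  fun j => ⟨codeVal π j, Nat.lt_succ_of_le (codeVal_le π j)⟩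

lemma codeVal_eq_rank (π : Equiv.Perm (Fin n)) (j : Fin n) :
    codeVal π j = (((Iic j).image π).filter (fun v => v < π j)).card := by
  rw [codeVal, codeVal_filter, Finset.filter_image,
    Finset.card_image_of_injective _ π.injective]

lemma rank_strict {C : Finset (Fin n)} {x y : Fin n} (hx : x ∈ C) (hxy : x < y) :
    (C.filter (fun v => v < x)).card < (C.filter (fun v => v < y)).card := by
  have hsub : insert x (C.filter (fun v => v < x)) ⊆ C.filter (fun v => v < y) := by
    intro z hz
    rcases Finset.mem_insert.mp hz with rfl | hz
    · exact Finset.mem_filter.mpr ⟨hx, hxy⟩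
    · rcases Finset.mem_filter.mp hz with ⟨hzC, hzx⟩
      exact Finset.mem_filter.mpr ⟨hzC, lt_trans hzx hxy⟩
  have := Finset.card_le_card hsub
  rwa [Finset.card_insert_of_notMem (by simp), Nat.succ_le_iff] at this

lemma rank_inj {C : Finset (Fin n)} {x y : Fin n} (hx : x ∈ C) (hy : y ∈ C)
    (h : (C.filter (fun v => v < x)).card = (C.filter (fun v => v < y)).card) : x = y := by
  rcases lt_trichotomy x y with hlt | he | hlt
  · exact absurd h (ne_of_lt (rank_strict hx hlt))
  · exact he
  · exact absurd h.symm (ne_of_lt (rank_strict hy hlt))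

lemma mem_Iic_image (τ : Equiv.Perm (Fin n)) (j v : Fin n) :
    v ∈ (Iic j).image τ ↔ τ.symm v ≤ j := by
  constructor
  · rintro hv
    rcases Finset.mem_image.mp hv with ⟨k, hk, rfl⟩
    simpa using Finset.mem_Iic.mp hk
  · intro h
    exact Finset.mem_image.mpr ⟨τ.symm v, Finset.mem_Iic.mpr h, τ.apply_symm_apply v⟩

lemma mem_Ioi_image (τ : Equiv.Perm (Fin n)) (j v : Fin n) :
    v ∈ (Ioi j).image τ ↔ j < τ.symm v := by
  constructor
  · rintro hv
    rcases Finset.mem_image.mp hv with ⟨k, hk, rfl⟩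
    simpa using Finset.mem_Ioi.mp hk
  · intro h
    exact Finset.mem_image.mpr ⟨τ.symm v, Finset.mem_Ioi.mpr h, τ.apply_symm_apply v⟩

lemma code_inj_aux (π σ : Equiv.Perm (Fin n)) (h : code π = code σ)
    (j : Fin n) (ih : ∀ k, j < k → π k = σ k) : π j = σ j := by
  have himg : (Ioi j).image π = (Ioi j).image σ :=
    Finset.image_congr (fun k hk => ih k (by simpa using hk))
  have hC : (Iic j).image π = (Iic j).image σ := by
    ext v
    rw [mem_Iic_image, mem_Iic_image, ← not_lt, ← not_lt, not_iff_not,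
      ← mem_Ioi_image, ← mem_Ioi_image, himg]
  have hval : codeVal π j = codeVal σ j := by
    have := congrFun h j
    exact congrArg Fin.val this
  rw [codeVal_eq_rank, codeVal_eq_rank, hC] at hval
  have hmem : π j ∈ (Iic j).image σ := by
    rw [← hC]; exact Finset.mem_image_of_mem π (Finset.mem_Iic.mpr (le_refl j))
  have hmem' : σ j ∈ (Iic j).image σ :=
    Finset.mem_image_of_mem σ (Finset.mem_Iic.mpr (le_refl j))
  exact rank_inj hmem hmem' hval

lemma code_injective : Function.Injective (code (n := n)) := by
  intro π σ h
  have H : ∀ m : ℕ, ∀ j : Fin n, n - j.val = m → π j = σ j := by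
    intro m
    induction m using Nat.strong_induction_on with
    | _ m ih =>
      intro j hj
      apply code_inj_aux π σ h j
      intro k hk
      have h1 : j.val < k.val := hk
      have h2 : k.val < n := k.isLt
      exact ih (n - k.val) (by omega) k rfl
  ext j
  exact congrArg Fin.val (H (n - j.val) j rfl)

lemma card_code :
    Fintype.card (Equiv.Perm (Fin n)) = Fintype.card (∀ j : Fin n, Fin (j.val + 1)) := by
  rw [Fintype.card_perm, Fintype.card_pi, Fintype.card_fin]
  simp only [Fintype.card_fin]
  rw [Fin.prod_univ_eq_prod_range (fun i => i + 1) n]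
  exact (Finset.prod_range_add_one_eq_factorial n).symm

/-- the code as an equivalence -/
noncomputable def codeEquiv : Equiv.Perm (Fin n) ≃ (∀ j : Fin n, Fin (j.val + 1)) :=
  Equiv.ofBijective code
    ((Fintype.bijective_iff_injective_and_card code).mpr ⟨code_injective, card_code⟩)

lemma codeEquiv_apply (π : Equiv.Perm (Fin n)) : codeEquiv π = code π := rfl

/-- make every position in `S` a lower record and every position of `T \ S` an upper record -/
def modify (T S : Finset (Fin n)) (c : ∀ j : Fin n, Fin (j.val + 1)) :
    ∀ j : Fin n, Fin (j.val + 1) :=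
  fun j => if j ∈ S then 0 else if j ∈ T then Fin.last j.val else c j

lemma step (T S S' : Finset (Fin n)) (hT : ∀ j ∈ T, 0 < j.val) (hS : S ⊆ T) (hS' : S' ⊆ T)
    (π : Equiv.Perm (Fin n)) (hπL : properLowerRecSet π = S) (hπU : properUpperRecSet π = T \ S) :
    properLowerRecSet ((codeEquiv (n := n)).symm (modify T S' (codeEquiv π))) = S'
    ∧ properUpperRecSet ((codeEquiv (n := n)).symm (modify T S' (codeEquiv π))) = T \ S'
    ∧ (codeEquiv (n := n)).symm
        (modify T S (codeEquiv ((codeEquiv (n := n)).symm (modify T S' (codeEquiv π))))) = π := by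
  set σ := (codeEquiv (n := n)).symm (modify T S' (codeEquiv π)) with hσ
  have hcσ : code σ = modify T S' (code π) := by
    rw [← codeEquiv_apply, hσ, Equiv.apply_symm_apply, codeEquiv_apply]
  have hvσ : ∀ j : Fin n, codeVal σ j = (modify T S' (code π) j).val := by
    intro j
    have := congrFun hcσ j
    exact congrArg Fin.val this
  -- codeVal of π at positions of S and T \ S
  have hπ0 : ∀ j ∈ S, codeVal π j = 0 := by
    intro j hj
    rw [← hπL] at hj
    exact ((mem_properLower π j).mp hj).2
  have hπtop : ∀ j ∈ T, j ∉ S → codeVal π j = j.val := by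
    intro j hjT hjS
    have : j ∈ properUpperRecSet π := by rw [hπU]; exact Finset.mem_sdiff.mpr ⟨hjT, hjS⟩
    exact ((mem_properUpper π j).mp this).2
  have hπmid : ∀ j : Fin n, 0 < j.val → j ∉ T → codeVal π j ≠ 0 ∧ codeVal π j ≠ j.val := by
    intro j hj0 hjT
    constructor
    · intro hc
      have : j ∈ properLowerRecSet π := (mem_properLower π j).mpr ⟨hj0, hc⟩
      rw [hπL] at this
      exact hjT (hS this)
    · intro hc
      have : j ∈ properUpperRecSet π := (mem_properUpper π j).mpr ⟨hj0, hc⟩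
      rw [hπU] at this
      exact hjT (Finset.mem_sdiff.mp this).1
  refine ⟨?_, ?_, ?_⟩
  · -- lower record set of σ is S'
    ext j
    rw [mem_properLower, hvσ j]
    unfold modify
    by_cases hjS' : j ∈ S'
    · simp [hjS', hT j (hS' hjS')]
    · by_cases hjT : j ∈ T
      · have h0 : 0 < j.val := hT j hjT
        simp [hjS', hjT, Fin.last, h0, Nat.pos_iff_ne_zero.mp h0]
      · simp only [hjS', hjT, if_false, iff_false]
        rintro ⟨hj0, hc⟩
        exact (hπmid j hj0 hjT).1 hc
  · -- upper record set of σ is T \ S'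
    ext j
    rw [mem_properUpper, hvσ j, Finset.mem_sdiff]
    unfold modify
    by_cases hjS' : j ∈ S'
    · have h0 : 0 < j.val := hT j (hS' hjS')
      rw [if_pos hjS']
      constructor
      · rintro ⟨hj0, hc⟩
        have : ((0 : Fin (j.val + 1)) : ℕ) = 0 := rfl
        omega
      · rintro ⟨-, habs⟩
        exact absurd hjS' habs
    · by_cases hjT : j ∈ T
      · simp [hjS', hjT, Fin.last, hT j hjT]
      · rw [if_neg hjS', if_neg hjT]
        constructor
        · rintro ⟨hj0, hc⟩
          exact absurd hc (hπmid j hj0 hjT).2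
        · rintro ⟨hjT', -⟩
          exact absurd hjT' hjT
  · -- round trip
    have heq : modify T S (modify T S' (code π)) = code π := by
      funext j
      unfold modify
      by_cases hjS : j ∈ S
      · have : codeVal π j = 0 := hπ0 j hjS
        simp only [hjS, if_true]
        apply Fin.ext
        simp [code, this]
      · by_cases hjT : j ∈ T
        · have : codeVal π j = j.val := hπtop j hjT hjS
          simp only [hjS, hjT, if_true, if_false]
          apply Fin.ext
          simp [code, this, Fin.last]
        · have hjS' : j ∉ S' := fun h => hjT (hS' h)
          simp [hjS, hjT, hjS']
    rw [codeEquiv_apply σ, hcσ, heq, ← codeEquiv_apply π, Equiv.symm_apply_apply]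

end RecordsAux


/-- given a set `T` of proper positions and `A, B ⊆ T` with `|A| = |B|`,
as many permutations have proper lower record set `A` and proper upper record set `T \ A`
as have proper lower record set `B` and proper upper record set `T \ B`. -/
theorem stmt_4 (n : ℕ) (hn : 1 ≤ n) (T A B : Finset (Fin n))
    (hT : ∀ j ∈ T, 0 < j.val) (hA : A ⊆ T) (hB : B ⊆ T) (hAB : A.card = B.card) :
    (univ.filter fun π : Equiv.Perm (Fin n) =>
        properLowerRecSet π = A ∧ properUpperRecSet π = T \ A).card
      = (univ.filter fun π : Equiv.Perm (Fin n) =>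
        properLowerRecSet π = B ∧ properUpperRecSet π = T \ B).card := by
  classical
  apply Finset.card_bij'
    (fun π _ => (RecordsAux.codeEquiv (n := n)).symm
        (RecordsAux.modify T B (RecordsAux.codeEquiv π)))
    (fun σ _ => (RecordsAux.codeEquiv (n := n)).symm
        (RecordsAux.modify T A (RecordsAux.codeEquiv σ)))
  · intro π hπ
    rcases Finset.mem_filter.mp hπ with ⟨-, hL, hU⟩
    obtain ⟨h1, h2, -⟩ := RecordsAux.step T A B hT hA hB π hL hU
    exact Finset.mem_filter.mpr ⟨Finset.mem_univ _, h1, h2⟩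
  · intro σ hσ
    rcases Finset.mem_filter.mp hσ with ⟨-, hL, hU⟩
    obtain ⟨h1, h2, -⟩ := RecordsAux.step T B A hT hB hA σ hL hU
    exact Finset.mem_filter.mpr ⟨Finset.mem_univ _, h1, h2⟩
  · intro π hπ
    rcases Finset.mem_filter.mp hπ with ⟨-, hL, hU⟩
    obtain ⟨-, -, h3⟩ := RecordsAux.step T A B hT hA hB π hL hU
    exact h3
  · intro σ hσ
    rcases Finset.mem_filter.mp hσ with ⟨-, hL, hU⟩
    obtain ⟨-, -, h3⟩ := RecordsAux.step T B A hT hB hA σ hL hU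
    exact h3
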